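/- Fix real numbers $\alpha, \beta > 0$ and $q > 0$, and set $a_1 = \alpha^{-1}$, $a_2 = \beta^{-1}$. For real numbers $x_1, \dots, x_n$, let $t_j = q x_j^2 / 2$ and define $\mathbf{B}(x_1, \dots, x_n) = \sum_{k_1, \dots, k_n \in \{1,2\}} a_{k_1} \cdots a_{k_n} \prod_{m=1}^n \cos\left( t_m - t_{m+1} + \frac{k_{m+1} - k_m}{2} \pi \right)$, where indices are cyclic ($k_{n+1} = k_1$, $t_{n+1} = t_1$). Then $\mathbf{B}(x_1, \dots, x_n) = 2 \left( \frac{\alpha + \beta}{2\alpha\beta} \right)^n \left\{ 1 + \sum_{0 < 2k \le n} \left( \frac{\alpha - \beta}{\alpha + \beta} \right)^{2k} \sum_{1 \le j_1 < j_2 < \dots < j_{2k} \le n} \cos\left( q \sum_{r=1}^{2k} (-1)^r x_{j_r}^2 \right) \right\}$. -/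

import Mathlib

open scoped Classical

namespace Stmt9
open Finset Complex

variable {n : ℕ} [NeZero n]

def par (C : Finset (Fin n)) (m : Fin n) : ℕ :=
  (C.filter fun j => 0 < j.val ∧ j.val ≤ m.val).card

noncomputable def bld (b : Bool) (C : Finset (Fin n)) : Fin n → Bool :=
  fun m => if Odd (par C m) then !b else b

noncomputable def chg (ε : Fin n → Bool) : Finset (Fin n) :=
  Finset.univ.filter fun m => ε (m - 1) ≠ ε m

lemma sub_one_val (m : Fin n) : ((m - 1 : Fin n) : ℕ) = if m.val = 0 then n - 1 else m.val - 1 := by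
  rcases n with _ | n'
  · exact absurd rfl (NeZero.ne 0)
  · rw [Fin.coe_sub_one]
    by_cases h : m = 0
    · subst h; simp
    · rw [if_neg h, if_neg (show ¬ (m : ℕ) = 0 from fun h' => h (Fin.ext h'))]

lemma par_zero (C : Finset (Fin n)) : par C 0 = 0 := by
  unfold par
  rw [Finset.card_eq_zero, Finset.filter_eq_empty_iff]
  intro j _
  simp only [Fin.val_zero]
  omega

lemma par_succ (C : Finset (Fin n)) (m : Fin n) (h : m ≠ 0) :
    par C m = par C (m - 1) + (if m ∈ C then 1 else 0) := by
  have hm : 0 < m.val := by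
    rcases Nat.eq_zero_or_pos m.val with h0 | h0
    · exact absurd (Fin.ext h0) h
    · exact h0
  have hsub : ((m - 1 : Fin n) : ℕ) = m.val - 1 := by
    rw [sub_one_val]; simp [Nat.pos_iff_ne_zero.mp hm]
  unfold par
  rw [hsub]
  have hsplit : (C.filter fun j => 0 < j.val ∧ j.val ≤ m.val)
      = (C.filter fun j => (0 < j.val ∧ j.val ≤ m.val - 1) ∨ j = m) := by
    apply Finset.filter_congr
    intro j _
    simp only [eq_iff_iff, Fin.ext_iff]
    constructor
    · rintro ⟨h1, h2⟩
      rcases Nat.lt_or_ge j.val m.val with h3 | h3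
      · left; exact ⟨h1, by omega⟩
      · right; omega
    · rintro (⟨h1, h2⟩ | h1) <;> omega
  rw [hsplit, Finset.filter_or, Finset.card_union_of_disjoint, Finset.filter_eq']
  · congr 1
    split <;> simp
  · rw [Finset.disjoint_left]
    rintro j hj hj2
    simp only [Finset.mem_filter, Fin.ext_iff] at hj hj2
    omega

lemma par_last (C : Finset (Fin n)) (hC : Even C.card) :
    Odd (par C (0 - 1 : Fin n)) ↔ (0 : Fin n) ∈ C := by
  have hval : ((0 - 1 : Fin n) : ℕ) = n - 1 := by rw [sub_one_val]; simp
  have hn : 0 < n := Nat.pos_of_ne_zero (NeZero.ne n)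
  have hfilter : (C.filter fun j => 0 < j.val ∧ j.val ≤ ((0 - 1 : Fin n) : ℕ)) = C.erase 0 := by
    rw [hval]
    ext j
    simp only [Finset.mem_filter, Finset.mem_erase]
    have := j.isLt
    constructor
    · rintro ⟨hj, h1, _⟩
      refine ⟨fun h0 => ?_, hj⟩
      · rw [h0] at h1; simp at h1
    · rintro ⟨hj0, hj⟩
      refine ⟨hj, ?_, by omega⟩
      rcases Nat.eq_zero_or_pos j.val with h0 | h0
      · exact absurd (Fin.ext h0) hj0
      · exact h0
  unfold par
  rw [hfilter]
  by_cases h0 : (0 : Fin n) ∈ C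
  · rw [Finset.card_erase_of_mem h0]
    have hpos : 1 ≤ C.card := Finset.card_pos.mpr ⟨0, h0⟩
    rw [Nat.odd_iff]
    rw [Nat.even_iff] at hC
    simp only [h0, iff_true]
    omega
  · rw [Finset.erase_eq_of_notMem h0]
    rw [Nat.odd_iff]
    rw [Nat.even_iff] at hC
    simp only [h0, iff_false]
    omega

lemma bld_zero (b : Bool) (C : Finset (Fin n)) : bld b C 0 = b := by
  simp [bld, par_zero, Nat.odd_iff]

lemma mem_chg_iff (ε : Fin n → Bool) (m : Fin n) : m ∈ chg ε ↔ ε (m - 1) ≠ ε m := by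
  simp [chg]

lemma odd_succ_not (p : ℕ) : Odd (p + 1) ↔ ¬ Odd p := by
  rw [Nat.odd_add_one, Nat.not_odd_iff_even]

lemma chg_bld (b : Bool) (C : Finset (Fin n)) (hC : Even C.card) : chg (bld b C) = C := by
  ext m
  rw [mem_chg_iff]
  by_cases hm : m = 0
  · subst hm
    rw [bld_zero]
    show (if Odd (par C (0-1)) then !b else b) ≠ b ↔ 0 ∈ C
    by_cases h : Odd (par C (0 - 1 : Fin n))
    · rw [if_pos h]
      simpa using (par_last C hC).mp h
    · rw [if_neg h]
      simp only [ne_eq, not_true_eq_false, false_iff]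
      intro h0
      exact h ((par_last C hC).mpr h0)
  · show (if Odd (par C (m-1)) then !b else b) ≠ (if Odd (par C m) then !b else b) ↔ m ∈ C
    rw [par_succ C m hm]
    by_cases hmem : m ∈ C
    · rw [if_pos hmem]
      by_cases h : Odd (par C (m-1))
      · rw [if_pos h, if_neg (by rw [odd_succ_not]; exact not_not_intro h)]
        simpa using hmem
      · rw [if_neg h, if_pos ((odd_succ_not _).mpr h)]
        simpa using hmem
    · rw [if_neg hmem, add_zero]
      simp only [ne_eq, not_true_eq_false, false_iff]
      exact hmem

lemma bld_chg (ε : Fin n → Bool) : bld (ε 0) (chg ε) = ε := by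
  funext m
  suffices H : ∀ v : ℕ, ∀ m : Fin n, m.val = v → bld (ε 0) (chg ε) m = ε m from H m.val m rfl
  intro v
  induction v with
  | zero => intro m hm; rw [show m = 0 from Fin.ext hm, bld_zero]
  | succ v ih =>
    intro m hm
    have hm0 : m ≠ 0 := by intro h; rw [h] at hm; simp at hm
    have hprev : ((m - 1 : Fin n) : ℕ) = v := by
      rw [sub_one_val, if_neg (by omega)]; omega
    have hih := ih (m - 1) hprev
    show (if Odd (par (chg ε) m) then !(ε 0) else (ε 0)) = ε m
    have hih' : (if Odd (par (chg ε) (m-1)) then !(ε 0) else (ε 0)) = ε (m - 1) := hih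
    rw [par_succ (chg ε) m hm0]
    by_cases hmem : m ∈ chg ε
    · have hne : ε (m - 1) ≠ ε m := (mem_chg_iff ε m).mp hmem
      have hflip : ε m = !(ε (m-1)) := by
        cases h1 : ε (m-1) <;> cases h2 : ε m <;> simp_all
      rw [if_pos hmem]
      by_cases h : Odd (par (chg ε) (m-1))
      · rw [if_pos h] at hih'
        rw [if_neg (by rw [odd_succ_not]; exact not_not_intro h), hflip, ← hih']
        simp
      · rw [if_neg h] at hih'
        rw [if_pos ((odd_succ_not _).mpr h), hflip, hih']
    · have heq : ε (m - 1) = ε m := by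
        by_contra hne; exact hmem ((mem_chg_iff ε m).mpr hne)
      rw [if_neg hmem, add_zero]
      exact hih'.trans heq

lemma even_chg (ε : Fin n → Bool) : Even (chg ε).card := by
  have key : (-1 : ℤ) ^ (chg ε).card = 1 := by
    have h1 : (-1 : ℤ) ^ (chg ε).card = ∏ m ∈ chg ε, (-1 : ℤ) := by
      rw [Finset.prod_const]
    have h2 : ∏ m ∈ chg ε, (-1 : ℤ) = ∏ m : Fin n, (if ε (m-1) ≠ ε m then (-1 : ℤ) else 1) := by
      rw [← Finset.prod_filter]
      rfl
    have h3 : ∀ m : Fin n, (if ε (m-1) ≠ ε m then (-1 : ℤ) else 1)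
        = (if ε (m-1) then 1 else -1) * (if ε m then 1 else -1) := by
      intro m
      cases h : ε (m-1) <;> cases h' : ε m <;> simp
    rw [h1, h2, Finset.prod_congr rfl (fun m _ => h3 m), Finset.prod_mul_distrib]
    have h4 : ∏ m : Fin n, (if ε (m-1) then (1:ℤ) else -1) = ∏ m : Fin n, (if ε m then 1 else -1) := by
      apply Fintype.prod_equiv (Equiv.subRight (1 : Fin n))
      intro m
      rfl
    rw [h4, ← sq]
    rw [← Finset.prod_pow]
    apply Finset.prod_eq_one
    intro m _
    cases h : ε m <;> simp
  rcases Nat.even_or_odd (chg ε).card with h | h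
  · exact h
  · rw [h.neg_one_pow] at key; norm_num at key

def sgn (b : Bool) : ℝ := if b then 1 else -1
def zsg (b : Bool) : ℤ := if b then 1 else -1


lemma sum_shift {M : Type*} [AddCommMonoid M] (f : Fin n → M) :
    ∑ m : Fin n, f (m + 1) = ∑ m : Fin n, f m :=
  Fintype.sum_equiv (Equiv.addRight (1 : Fin n)) _ _ (fun _ => rfl)

lemma prod_shift {M : Type*} [CommMonoid M] (f : Fin n → M) :
    ∏ m : Fin n, f (m - 1) = ∏ m : Fin n, f m :=
  Fintype.prod_equiv (Equiv.subRight (1 : Fin n)) _ _ (fun _ => rfl)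

lemma I_zpow_sum {ι : Type*} (s : Finset ι) (f : ι → ℤ) :
    (I : ℂ) ^ (∑ m ∈ s, f m) = ∏ m ∈ s, I ^ f m := by
  classical
  induction s using Finset.cons_induction with
  | empty => simp
  | cons a s ha ih =>
    rw [Finset.sum_cons, Finset.prod_cons, zpow_add₀ I_ne_zero, ih]

-- counting elements of C below an embedded point
lemma card_filter_le (C : Finset (Fin n)) {k : ℕ} (h : C.card = k) (r : Fin k) :
    (C.filter fun j => j ≤ C.orderEmbOfFin h r).card = r.val + 1 := by
  have himg : C.filter (fun j => j ≤ C.orderEmbOfFin h r)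
      = (Finset.Iic r).image (C.orderEmbOfFin h) := by
    ext j
    simp only [Finset.mem_filter, Finset.mem_image, Finset.mem_Iic]
    constructor
    · rintro ⟨hj, hle⟩
      have : j ∈ Set.range (C.orderEmbOfFin h) := by
        rw [Finset.range_orderEmbOfFin]; exact hj
      obtain ⟨r', hr'⟩ := this
      refine ⟨r', ?_, hr'⟩
      rw [← (C.orderEmbOfFin h).le_iff_le]
      rw [hr']; exact hle
    · rintro ⟨r', hr', rfl⟩
      refine ⟨Finset.orderEmbOfFin_mem C h r', ?_⟩
      exact (C.orderEmbOfFin h).monotone hr'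
  rw [himg, Finset.card_image_of_injective _ (C.orderEmbOfFin h).injective, Fin.card_Iic]

lemma par_emb (C : Finset (Fin n)) {k : ℕ} (h : C.card = k) (r : Fin k) :
    par C (C.orderEmbOfFin h r) = r.val + 1 - (if (0 : Fin n) ∈ C then 1 else 0) := by
  have hsplit : C.filter (fun j => 0 < j.val ∧ j.val ≤ (C.orderEmbOfFin h r).val)
      = (C.filter (fun j => j ≤ C.orderEmbOfFin h r)).erase 0 := by
    ext j
    simp only [Finset.mem_filter, Finset.mem_erase, Fin.le_def]
    constructor
    · rintro ⟨hj, h1, h2⟩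
      exact ⟨fun h0 => by rw [h0] at h1; simp at h1, hj, h2⟩
    · rintro ⟨hj0, hj, h2⟩
      refine ⟨hj, ?_, h2⟩
      rcases Nat.eq_zero_or_pos j.val with h0 | h0
      · exact absurd (Fin.ext h0) hj0
      · exact h0
  unfold par
  rw [hsplit]
  by_cases h0 : (0 : Fin n) ∈ C
  · have h0' : (0 : Fin n) ∈ C.filter (fun j => j ≤ C.orderEmbOfFin h r) := by
      simp only [Finset.mem_filter]
      exact ⟨h0, Fin.zero_le _⟩
    rw [Finset.card_erase_of_mem h0', card_filter_le C h r, if_pos h0]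
  · have h0' : (0 : Fin n) ∉ C.filter (fun j => j ≤ C.orderEmbOfFin h r) := by
      simp only [Finset.mem_filter]
      tauto
    rw [Finset.erase_eq_of_notMem h0', card_filter_le C h r, if_neg h0]
    omega

lemma phase_eq (C : Finset (Fin n)) {k : ℕ} (h : C.card = k) (f : Fin n → ℝ) :
    ∑ m ∈ C, f m * (-1 : ℝ) ^ (par C m)
      = (if (0 : Fin n) ∈ C then -1 else 1)
        * ∑ r : Fin k, (-1 : ℝ) ^ (r.val + 1) * f (C.orderEmbOfFin h r) := by
  rw [Finset.mul_sum]
  symm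
  apply Finset.sum_nbij (i := fun r => C.orderEmbOfFin h r)
  · intro r _
    exact Finset.orderEmbOfFin_mem C h r
  · intro r _ r' _ hrr'
    exact (C.orderEmbOfFin h).injective hrr'
  · intro j hj
    have : j ∈ Set.range (C.orderEmbOfFin h) := by
      rw [Finset.range_orderEmbOfFin]; exact hj
    obtain ⟨r, hr⟩ := this
    exact ⟨r, Finset.mem_coe.mpr (Finset.mem_univ r), hr⟩
  · intro r _
    rw [par_emb C h r]
    by_cases h0 : (0 : Fin n) ∈ C
    · rw [if_pos h0, if_pos h0]
      have : r.val + 1 - 1 = r.val := by omega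
      rw [this, pow_succ]
      ring
    · rw [if_neg h0, if_neg h0]
      simp only [Nat.sub_zero]
      ring

lemma cosid (θ : ℝ) (d : ℤ) : (Complex.cos (θ + d/2 * Real.pi) : ℂ) =
    (I^d * Complex.exp (θ*I) + I^(-d) * Complex.exp (-θ*I))/2 := by
  have h2 : Complex.exp (Real.pi/2*I) = I := by
    rw [Complex.exp_mul_I]; rw [Complex.cos_pi_div_two, Complex.sin_pi_div_two]; ring
  rw [Complex.cos]
  have e1 : ((θ:ℂ) + d/2*Real.pi) * I = θ*I + d * (Real.pi/2*I) := by ring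
  have e2 : (-((θ:ℂ) + d/2*Real.pi)) * I = -θ*I + ((-d : ℤ) : ℂ) * (Real.pi/2*I) := by push_cast; ring
  rw [e1, e2, Complex.exp_add, Complex.exp_add, Complex.exp_int_mul, Complex.exp_int_mul, h2]
  ring

noncomputable def Wf (a : ℕ → ℝ) (t : Fin n → ℝ) (m : Fin n) (κ κ' : ℕ) (b : Bool) : ℂ :=
  ((a κ / 2 : ℝ) : ℂ) * I ^ (zsg b * ((κ' : ℤ) - (κ : ℤ)))
    * Complex.exp ((sgn b * (t m - t (m + 1)) : ℝ) * I)

lemma factor_expand (a : ℕ → ℝ) (t : Fin n → ℝ) (m : Fin n) (κ κ' : ℕ) :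
    ((a κ : ℝ) : ℂ) * (Real.cos (t m - t (m+1) + ((κ' : ℝ) - (κ : ℝ))/2 * Real.pi) : ℂ)
      = ∑ b : Bool, Wf a t m κ κ' b := by
  rw [Fintype.sum_bool]
  unfold Wf
  rw [Complex.ofReal_cos]
  have harg : ((t m - t (m+1) + ((κ' : ℝ) - (κ : ℝ))/2 * Real.pi : ℝ) : ℂ)
      = ((t m - t (m+1) : ℝ) : ℂ) + ((((κ' : ℤ) - (κ : ℤ)) : ℤ) : ℂ)/2 * (Real.pi : ℂ) := by
    push_cast; ring
  rw [harg, cosid]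
  simp only [sgn, zsg, if_true, if_false, one_mul, neg_mul, one_mul]
  push_cast
  ring_nf

-- evaluation of I ^ small even powers
lemma I_zpow_two : (I : ℂ) ^ (2 : ℤ) = -1 := by
  rw [show (2:ℤ) = ((2:ℕ):ℤ) from rfl, zpow_natCast, Complex.I_sq]
lemma I_zpow_four : (I : ℂ) ^ (4 : ℤ) = 1 := by
  rw [show (4:ℤ) = ((4:ℕ):ℤ) from rfl, zpow_natCast, Complex.I_pow_four]
lemma I_zpow_neg_two : (I : ℂ) ^ (-2 : ℤ) = -1 := by
  rw [show (-2:ℤ) = -(2:ℤ) from rfl, zpow_neg, I_zpow_two]; norm_num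
lemma I_zpow_neg_four : (I : ℂ) ^ (-4 : ℤ) = 1 := by
  rw [show (-4:ℤ) = -(4:ℤ) from rfl, zpow_neg, I_zpow_four]; norm_num

lemma inner_k_sum (a : ℕ → ℝ) (b' b : Bool) :
    ∑ κ ∈ ({1, 2} : Finset ℕ), ((a κ / 2 : ℝ) : ℂ) * I ^ ((κ : ℤ) * (zsg b' - zsg b))
      = if b' = b then (((a 1 + a 2)/2 : ℝ) : ℂ) else (((a 2 - a 1)/2 : ℝ) : ℂ) := by
  rw [Finset.sum_pair (by norm_num : (1:ℕ) ≠ 2)]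
  have h2 : (I : ℂ) ^ (2 : ℤ) = -1 := I_zpow_two
  have h4 : (I : ℂ) ^ (4 : ℤ) = 1 := I_zpow_four
  have hn2 : (I : ℂ) ^ (-2 : ℤ) = -1 := I_zpow_neg_two
  have hn4 : (I : ℂ) ^ (-4 : ℤ) = 1 := I_zpow_neg_four
  cases b' <;> cases b <;> simp only [zsg, Bool.false_eq_true, Bool.true_eq_false, if_true, if_false]
  · rw [show ((1:ℕ):ℤ) * ((-1:ℤ) - (-1)) = 0 by norm_num,
        show ((2:ℕ):ℤ) * ((-1:ℤ) - (-1)) = 0 by norm_num]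
    rw [zpow_zero]
    push_cast; ring
  · rw [show ((1:ℕ):ℤ) * ((-1:ℤ) - 1) = -2 by norm_num,
        show ((2:ℕ):ℤ) * ((-1:ℤ) - 1) = -4 by norm_num, hn2, hn4]
    push_cast; ring
  · rw [show ((1:ℕ):ℤ) * ((1:ℤ) - (-1)) = 2 by norm_num,
        show ((2:ℕ):ℤ) * ((1:ℤ) - (-1)) = 4 by norm_num, h2, h4]
    push_cast; ring
  · rw [show ((1:ℕ):ℤ) * ((1:ℤ) - 1) = 0 by norm_num,
        show ((2:ℕ):ℤ) * ((1:ℤ) - 1) = 0 by norm_num]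
    rw [zpow_zero]
    push_cast; ring

lemma phi_shift (ε : Fin n → Bool) (t : Fin n → ℝ) :
    ∑ m : Fin n, sgn (ε m) * (t m - t (m + 1))
      = ∑ m : Fin n, t m * (sgn (ε m) - sgn (ε (m - 1))) := by
  have h1 : ∑ m : Fin n, sgn (ε m) * t (m + 1) = ∑ m : Fin n, sgn (ε (m - 1)) * t m := by
    rw [← sum_shift (fun m => sgn (ε (m - 1)) * t m)]
    apply Finset.sum_congr rfl
    intro m _
    rw [add_sub_cancel_right]
  calc ∑ m : Fin n, sgn (ε m) * (t m - t (m + 1))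
      = ∑ m : Fin n, (sgn (ε m) * t m - sgn (ε m) * t (m + 1)) := by
        apply Finset.sum_congr rfl; intro m _; ring
    _ = ∑ m : Fin n, sgn (ε m) * t m - ∑ m : Fin n, sgn (ε m) * t (m + 1) := by
        rw [Finset.sum_sub_distrib]
    _ = ∑ m : Fin n, sgn (ε m) * t m - ∑ m : Fin n, sgn (ε (m - 1)) * t m := by rw [h1]
    _ = ∑ m : Fin n, t m * (sgn (ε m) - sgn (ε (m - 1))) := by
        rw [← Finset.sum_sub_distrib]
        apply Finset.sum_congr rfl; intro m _; ring

lemma kd_shift (ε : Fin n → Bool) (k : Fin n → ℕ) :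
    ∑ m : Fin n, zsg (ε m) * ((k (m + 1) : ℤ) - (k m : ℤ))
      = ∑ m : Fin n, (k m : ℤ) * (zsg (ε (m - 1)) - zsg (ε m)) := by
  have h1 : ∑ m : Fin n, zsg (ε m) * (k (m + 1) : ℤ)
      = ∑ m : Fin n, zsg (ε (m - 1)) * (k m : ℤ) := by
    rw [← sum_shift (fun m => zsg (ε (m - 1)) * (k m : ℤ))]
    apply Finset.sum_congr rfl
    intro m _
    rw [add_sub_cancel_right]
  calc ∑ m : Fin n, zsg (ε m) * ((k (m + 1) : ℤ) - (k m : ℤ))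
      = ∑ m : Fin n, (zsg (ε m) * (k (m + 1) : ℤ) - zsg (ε m) * (k m : ℤ)) := by
        apply Finset.sum_congr rfl; intro m _; ring
    _ = ∑ m : Fin n, zsg (ε m) * (k (m + 1) : ℤ) - ∑ m : Fin n, zsg (ε m) * (k m : ℤ) := by
        rw [Finset.sum_sub_distrib]
    _ = ∑ m : Fin n, zsg (ε (m - 1)) * (k m : ℤ) - ∑ m : Fin n, zsg (ε m) * (k m : ℤ) := by rw [h1]
    _ = ∑ m : Fin n, (k m : ℤ) * (zsg (ε (m - 1)) - zsg (ε m)) := by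
        rw [← Finset.sum_sub_distrib]
        apply Finset.sum_congr rfl; intro m _; ring

lemma step3 (a : ℕ → ℝ) (t : Fin n → ℝ) (ε : Fin n → Bool) :
    ∑ k ∈ Fintype.piFinset (fun _ : Fin n => ({1, 2} : Finset ℕ)),
        ∏ m : Fin n, Wf a t m (k m) (k (m + 1)) (ε m)
      = (∏ m : Fin n, if ε (m - 1) = ε m then (((a 1 + a 2)/2 : ℝ) : ℂ)
            else (((a 2 - a 1)/2 : ℝ) : ℂ))
        * Complex.exp (((∑ m : Fin n, t m * (sgn (ε m) - sgn (ε (m - 1)))) : ℝ) * I) := by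
  have hexp : ∀ k : Fin n → ℕ,
      ∏ m : Fin n, Complex.exp ((sgn (ε m) * (t m - t (m + 1)) : ℝ) * I)
        = Complex.exp (((∑ m : Fin n, t m * (sgn (ε m) - sgn (ε (m - 1)))) : ℝ) * I) := by
    intro k
    rw [← Complex.exp_sum]
    congr 1
    rw [← Finset.sum_mul]
    rw [← Complex.ofReal_sum]
    rw [phi_shift]
  have hW : ∀ k : Fin n → ℕ,
      ∏ m : Fin n, Wf a t m (k m) (k (m + 1)) (ε m)
        = (∏ m : Fin n, ((a (k m) / 2 : ℝ) : ℂ) * I ^ ((k m : ℤ) * (zsg (ε (m - 1)) - zsg (ε m))))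
          * Complex.exp (((∑ m : Fin n, t m * (sgn (ε m) - sgn (ε (m - 1)))) : ℝ) * I) := by
    intro k
    unfold Wf
    rw [Finset.prod_mul_distrib, hexp k]
    congr 1
    rw [Finset.prod_mul_distrib, Finset.prod_mul_distrib]
    congr 1
    rw [← I_zpow_sum, ← I_zpow_sum, kd_shift]
  calc ∑ k ∈ Fintype.piFinset (fun _ : Fin n => ({1, 2} : Finset ℕ)),
        ∏ m : Fin n, Wf a t m (k m) (k (m + 1)) (ε m)
      = (∑ k ∈ Fintype.piFinset (fun _ : Fin n => ({1, 2} : Finset ℕ)),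
          ∏ m : Fin n, ((a (k m) / 2 : ℝ) : ℂ) * I ^ ((k m : ℤ) * (zsg (ε (m - 1)) - zsg (ε m))))
          * Complex.exp (((∑ m : Fin n, t m * (sgn (ε m) - sgn (ε (m - 1)))) : ℝ) * I) := by
        rw [Finset.sum_mul]
        exact Finset.sum_congr rfl (fun k _ => hW k)
    _ = _ := by
        congr 1
        rw [← Finset.prod_univ_sum (fun _ => ({1, 2} : Finset ℕ))
          (fun m κ => ((a κ / 2 : ℝ) : ℂ) * I ^ ((κ : ℤ) * (zsg (ε (m - 1)) - zsg (ε m))))]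
        apply Finset.prod_congr rfl
        intro m _
        exact inner_k_sum a (ε (m - 1)) (ε m)

lemma sgn_bld (b : Bool) (C : Finset (Fin n)) (m : Fin n) :
    sgn (bld b C m) = sgn b * (-1 : ℝ) ^ (par C m) := by
  unfold bld
  by_cases h : Odd (par C m)
  · rw [if_pos h, h.neg_one_pow]
    cases b <;> simp [sgn]
  · rw [if_neg h, (Nat.not_odd_iff_even.mp h).neg_one_pow]
    cases b <;> simp [sgn]

lemma prod_bld (u v : ℂ) (b : Bool) (C : Finset (Fin n)) (hC : Even C.card) :
    (∏ m : Fin n, if bld b C (m - 1) = bld b C m then u else v)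
      = v ^ C.card * u ^ (n - C.card) := by
  have hmem : ∀ m : Fin n, m ∈ C ↔ bld b C (m - 1) ≠ bld b C m := by
    intro m
    have h := mem_chg_iff (bld b C) m
    rw [chg_bld b C hC] at h
    exact h
  have : ∀ m : Fin n, (if bld b C (m - 1) = bld b C m then u else v)
      = (if m ∈ C then v else u) := by
    intro m
    by_cases h : m ∈ C
    · rw [if_neg ((hmem m).mp h), if_pos h]
    · rw [if_pos (not_ne_iff.mp (fun hne => h ((hmem m).mpr hne))), if_neg h]
  rw [Finset.prod_congr rfl (fun m _ => this m), Finset.prod_ite, Finset.prod_const,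
    Finset.prod_const]
  have h1 : Finset.univ.filter (fun m => m ∈ C) = C := by
    ext m; simp
  have h2 : (Finset.univ.filter (fun m => m ∉ C)).card = n - C.card := by
    have h3 := Finset.card_filter_add_card_filter_not
      (s := (Finset.univ : Finset (Fin n))) (p := fun m => m ∈ C)
    rw [h1, Finset.card_univ, Fintype.card_fin] at h3
    omega
  rw [h1, h2]

lemma phi_bld (t : Fin n → ℝ) (b : Bool) (C : Finset (Fin n)) (hC : Even C.card) :
    ∑ m : Fin n, t m * (sgn (bld b C m) - sgn (bld b C (m - 1)))
      = sgn b * ∑ m ∈ C, (2 * t m) * (-1 : ℝ) ^ (par C m) := by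
  have hmem : ∀ m : Fin n, m ∈ C ↔ bld b C (m - 1) ≠ bld b C m := by
    intro m
    have h := mem_chg_iff (bld b C) m
    rw [chg_bld b C hC] at h
    exact h
  have key : ∀ m : Fin n, t m * (sgn (bld b C m) - sgn (bld b C (m - 1)))
      = if m ∈ C then sgn b * ((2 * t m) * (-1 : ℝ) ^ (par C m)) else 0 := by
    intro m
    by_cases h : m ∈ C
    · rw [if_pos h]
      have hne : bld b C (m - 1) ≠ bld b C m := (hmem m).mp h
      have hs : sgn (bld b C (m - 1)) = - sgn (bld b C m) := by
        cases h1 : bld b C (m - 1) <;> cases h2 : bld b C m <;> simp_all [sgn]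
      rw [hs, sgn_bld]
      ring
    · rw [if_neg h]
      have heq : bld b C (m - 1) = bld b C m := by
        by_contra hne; exact h ((hmem m).mpr hne)
      rw [heq]
      ring
  rw [Finset.sum_congr rfl (fun m _ => key m), Finset.sum_ite_mem, Finset.univ_inter,
    ← Finset.mul_sum]

def psi (t : Fin n → ℝ) (C : Finset (Fin n)) : ℝ :=
  ∑ m ∈ C, (2 * t m) * (-1 : ℝ) ^ (par C m)

lemma two_cos (ψ : ℝ) :
    Complex.exp ((ψ : ℂ) * I) + Complex.exp (((-ψ : ℝ) : ℂ) * I) = 2 * Complex.cos (ψ : ℂ) := by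
  rw [Complex.cos, Complex.ofReal_neg, show (-(ψ:ℂ)) * I = -((ψ:ℂ) * I) by ring]
  ring

lemma sum_eps (F : (Fin n → Bool) → ℂ) :
    ∑ ε : Fin n → Bool, F ε
      = ∑ p ∈ (Finset.univ : Finset Bool) ×ˢ
          (Finset.univ.filter fun C : Finset (Fin n) => Even C.card), F (bld p.1 p.2) := by
  symm
  apply Finset.sum_nbij' (i := fun p : Bool × Finset (Fin n) => bld p.1 p.2)
    (j := fun ε : Fin n → Bool => (ε 0, chg ε))
  · intro p _
    exact Finset.mem_univ _
  · intro ε _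
    rw [Finset.mem_product]
    exact ⟨Finset.mem_univ _, Finset.mem_filter.mpr ⟨Finset.mem_univ _, even_chg ε⟩⟩
  · intro p hp
    rw [Finset.mem_product, Finset.mem_filter] at hp
    exact Prod.ext (bld_zero p.1 p.2) (chg_bld p.1 p.2 hp.2.2)
  · intro ε _
    exact bld_chg ε
  · intro p _
    rfl

lemma cos_psi (t : Fin n → ℝ) (q : ℝ) (x : Fin n → ℝ) (h2t : ∀ m : Fin n, 2 * t m = q * x m ^ 2)
    (C : Finset (Fin n)) {k : ℕ} (h : C.card = 2 * k) :
    Real.cos (psi t C)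
      = Real.cos (q * ∑ r : Fin (2 * k), (-1 : ℝ) ^ ((r : ℕ) + 1) * x (C.orderEmbOfFin h r) ^ 2) := by
  unfold psi
  rw [phase_eq C h (fun m => 2 * t m)]
  have hsum : ∑ r : Fin (2 * k), (-1 : ℝ) ^ ((r : ℕ) + 1) * (2 * t (C.orderEmbOfFin h r))
      = q * ∑ r : Fin (2 * k), (-1 : ℝ) ^ ((r : ℕ) + 1) * x (C.orderEmbOfFin h r) ^ 2 := by
    rw [Finset.mul_sum]
    apply Finset.sum_congr rfl
    intro r _
    rw [h2t]
    ring
  rw [hsum]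
  by_cases h0 : (0 : Fin n) ∈ C
  · rw [if_pos h0, neg_one_mul, Real.cos_neg]
  · rw [if_neg h0, one_mul]

lemma sum_card_eq (k : ℕ) (G : Finset (Fin n) → ℝ) (g : (Fin (2 * k) → Fin n) → ℝ)
    (hG : ∀ (C : Finset (Fin n)) (h : C.card = 2 * k), G C = g (C.orderEmbOfFin h)) :
    ∑ C ∈ Finset.univ.filter (fun C : Finset (Fin n) => C.card = 2 * k), G C
      = ∑ j ∈ Finset.univ.filter (fun j : Fin (2 * k) → Fin n => StrictMono j), g j := by
  apply Finset.sum_nbij'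
    (i := fun C : Finset (Fin n) =>
      if h : C.card = 2 * k then ⇑(C.orderEmbOfFin h) else fun _ => (0 : Fin n))
    (j := fun f : Fin (2 * k) → Fin n => Finset.image f Finset.univ)
  · intro C hC
    have h : C.card = 2 * k := (Finset.mem_filter.mp hC).2
    rw [dif_pos h]
    exact Finset.mem_filter.mpr ⟨Finset.mem_univ _, (C.orderEmbOfFin h).strictMono⟩
  · intro f hf
    have hmono : StrictMono f := (Finset.mem_filter.mp hf).2
    refine Finset.mem_filter.mpr ⟨Finset.mem_univ _, ?_⟩
    rw [Finset.card_image_of_injective _ hmono.injective, Finset.card_univ, Fintype.card_fin]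
  · intro C hC
    have h : C.card = 2 * k := (Finset.mem_filter.mp hC).2
    rw [dif_pos h]
    ext j
    simp only [Finset.mem_image, Finset.mem_univ, true_and]
    rw [show (∃ r, C.orderEmbOfFin h r = j) ↔ j ∈ Set.range (C.orderEmbOfFin h) from Iff.rfl,
      Finset.range_orderEmbOfFin]
    simp
  · intro f hf
    have hmono : StrictMono f := (Finset.mem_filter.mp hf).2
    have hcard : (Finset.image f Finset.univ).card = 2 * k := by
      rw [Finset.card_image_of_injective _ hmono.injective, Finset.card_univ, Fintype.card_fin]
    rw [dif_pos hcard]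
    exact (Finset.orderEmbOfFin_unique hcard
      (fun r => Finset.mem_image_of_mem f (Finset.mem_univ r)) hmono).symm
  · intro C hC
    have h : C.card = 2 * k := (Finset.mem_filter.mp hC).2
    rw [dif_pos h]
    exact hG C h

end Stmt9

open Finset Complex Stmt9 in
/-- Expansion of the trace `𝐁(x₁,…,xₙ)` of the product of the matrices `B(xᵢ,xᵢ₊₁)`
into a sum of cosines (Lemma on the integrand of 𝐅). -/
theorem stmt_9 (n : ℕ) [NeZero n] (α β q : ℝ) (hα : 0 < α) (hβ : 0 < β) (hq : 0 < q)
    (x : Fin n → ℝ) (a : ℕ → ℝ) (ha : a = fun k => if k = 1 then α⁻¹ else β⁻¹)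
    (t : Fin n → ℝ) (ht : t = fun j => q * x j ^ 2 / 2)
    (B : ℝ) (hB : B = ∑ k ∈ Fintype.piFinset (fun _ : Fin n => ({1, 2} : Finset ℕ)),
      ∏ m : Fin n,
        a (k m) * Real.cos (t m - t (m + 1) + ((k (m + 1) : ℝ) - (k m : ℝ)) / 2 * Real.pi)) :
    B = 2 * ((α + β) / (2 * α * β)) ^ n *
      (1 + ∑ k ∈ Finset.Icc 1 (n / 2), ((α - β) / (α + β)) ^ (2 * k) *
        ∑ j ∈ Finset.univ.filter (fun j : Fin (2 * k) → Fin n => StrictMono j),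
          Real.cos (q * ∑ r : Fin (2 * k), (-1 : ℝ) ^ ((r : ℕ) + 1) * x (j r) ^ 2)) := by
  classical
  have hα' : α ≠ 0 := ne_of_gt hα
  have hβ' : β ≠ 0 := ne_of_gt hβ
  have h2t : ∀ m : Fin n, 2 * t m = q * x m ^ 2 := by intro m; rw [ht]; ring
  have ha1 : a 1 = α⁻¹ := by rw [ha]; simp
  have ha2 : a 2 = β⁻¹ := by rw [ha]; norm_num
  -- abbreviations
  set Sk : ℕ → ℝ := fun k => ∑ j ∈ Finset.univ.filter (fun j : Fin (2 * k) → Fin n => StrictMono j),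
      Real.cos (q * ∑ r : Fin (2 * k), (-1 : ℝ) ^ ((r : ℕ) + 1) * x (j r) ^ 2) with hSk
  -- complex chain
  have c1 : (B : ℂ) = ∑ k ∈ Fintype.piFinset (fun _ : Fin n => ({1, 2} : Finset ℕ)),
      ∏ m : Fin n, ((a (k m) : ℝ) : ℂ)
        * ((Real.cos (t m - t (m + 1) + ((k (m + 1) : ℝ) - (k m : ℝ)) / 2 * Real.pi) : ℝ) : ℂ) := by
    rw [hB, Complex.ofReal_sum]
    refine Finset.sum_congr rfl fun k _ => ?_
    rw [Complex.ofReal_prod]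
    exact Finset.prod_congr rfl fun m _ => Complex.ofReal_mul _ _
  have c2 : (B : ℂ) = ∑ ε : Fin n → Bool,
      (∏ m : Fin n, if ε (m - 1) = ε m then (((a 1 + a 2) / 2 : ℝ) : ℂ)
          else (((a 2 - a 1) / 2 : ℝ) : ℂ))
        * Complex.exp (((∑ m : Fin n, t m * (sgn (ε m) - sgn (ε (m - 1)))) : ℝ) * Complex.I) := by
    rw [c1]
    rw [Finset.sum_congr rfl (fun k _ => Finset.prod_congr rfl
      (fun m _ => factor_expand a t m (k m) (k (m + 1))))]
    rw [Finset.sum_congr rfl (fun k (_ : k ∈ Fintype.piFinset (fun _ : Fin n => ({1, 2} : Finset ℕ))) =>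
      Finset.prod_univ_sum (fun _ : Fin n => (Finset.univ : Finset Bool))
        (fun m b => Wf a t m (k m) (k (m + 1)) b))]
    rw [Finset.sum_comm, Fintype.piFinset_univ]
    exact Finset.sum_congr rfl fun ε _ => step3 a t ε
  have c3 : (B : ℂ) = ((∑ C ∈ Finset.univ.filter (fun C : Finset (Fin n) => Even C.card),
      ((a 2 - a 1) / 2) ^ C.card * ((a 1 + a 2) / 2) ^ (n - C.card)
        * (2 * Real.cos (psi t C)) : ℝ) : ℂ) := by
    rw [c2]
    rw [sum_eps (fun ε : Fin n → Bool =>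
      (∏ m : Fin n, if ε (m - 1) = ε m then (((a 1 + a 2) / 2 : ℝ) : ℂ)
          else (((a 2 - a 1) / 2 : ℝ) : ℂ))
        * Complex.exp (((∑ m : Fin n, t m * (sgn (ε m) - sgn (ε (m - 1)))) : ℝ) * Complex.I))]
    rw [Finset.sum_product_right, Complex.ofReal_sum]
    refine Finset.sum_congr rfl fun C hC => ?_
    have hev : Even C.card := (Finset.mem_filter.mp hC).2
    rw [Fintype.sum_bool]
    rw [prod_bld (((a 1 + a 2) / 2 : ℝ) : ℂ) (((a 2 - a 1) / 2 : ℝ) : ℂ) true C hev,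
      prod_bld (((a 1 + a 2) / 2 : ℝ) : ℂ) (((a 2 - a 1) / 2 : ℝ) : ℂ) false C hev,
      phi_bld t true C hev, phi_bld t false C hev]
    rw [show sgn true = 1 from rfl, show sgn false = -1 from rfl, one_mul, neg_one_mul]
    rw [← mul_add]
    rw [show (∑ m ∈ C, 2 * t m * (-1 : ℝ) ^ par C m) = psi t C from rfl]
    rw [Stmt9.two_cos (psi t C)]
    push_cast [Complex.ofReal_cos]
    ring
  -- real chain
  have r1 : ∑ C ∈ Finset.univ.filter (fun C : Finset (Fin n) => Even C.card),
      ((a 2 - a 1) / 2) ^ C.card * ((a 1 + a 2) / 2) ^ (n - C.card) * (2 * Real.cos (psi t C))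
      = 2 * ((a 1 + a 2) / 2) ^ n
        + ∑ k ∈ Finset.Icc 1 (n / 2),
            (((a 2 - a 1) / 2) ^ (2 * k) * ((a 1 + a 2) / 2) ^ (n - 2 * k) * 2) * Sk k := by
    set g : Finset (Fin n) → ℝ := fun C =>
      ((a 2 - a 1) / 2) ^ C.card * ((a 1 + a 2) / 2) ^ (n - C.card) * (2 * Real.cos (psi t C))
      with hg
    have hmaps : ∀ C ∈ Finset.univ.filter (fun C : Finset (Fin n) => Even C.card),
        C.card / 2 ∈ Finset.Icc 0 (n / 2) := by
      intro C _
      rw [Finset.mem_Icc]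
      refine ⟨Nat.zero_le _, Nat.div_le_div_right ?_⟩
      simpa using Finset.card_le_univ C
    rw [← Finset.sum_fiberwise_of_maps_to hmaps g]
    have f2 : ∀ k : ℕ, (Finset.univ.filter (fun C : Finset (Fin n) => Even C.card)).filter
        (fun C => C.card / 2 = k) = Finset.univ.filter (fun C : Finset (Fin n) => C.card = 2 * k) := by
      intro k
      ext C
      simp only [Finset.mem_filter, Finset.mem_univ, true_and, Nat.even_iff]
      omega
    rw [Finset.sum_congr rfl (fun k _ => by rw [f2 k])]
    have f3 : Finset.Icc 0 (n / 2) = insert 0 (Finset.Icc 1 (n / 2)) := by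
      ext k
      simp only [Finset.mem_Icc, Finset.mem_insert]
      omega
    rw [f3, Finset.sum_insert (by simp)]
    congr 1
    · have f4 : Finset.univ.filter (fun C : Finset (Fin n) => C.card = 2 * 0) = {(∅ : Finset (Fin n))} := by
        ext C
        simp [Finset.card_eq_zero]
      rw [f4, Finset.sum_singleton, hg]
      simp only [Finset.card_empty, pow_zero, Nat.sub_zero, psi, Finset.sum_empty, Real.cos_zero]
      ring
    · refine Finset.sum_congr rfl fun k hk => ?_
      have hcalc : ∀ (C : Finset (Fin n)) (h : C.card = 2 * k), g C
          = (fun j : Fin (2 * k) → Fin n => ((a 2 - a 1) / 2) ^ (2 * k) * ((a 1 + a 2) / 2) ^ (n - 2 * k)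
              * (2 * Real.cos (q * ∑ r : Fin (2 * k), (-1 : ℝ) ^ ((r : ℕ) + 1) * x (j r) ^ 2)))
            (C.orderEmbOfFin h) := by
        intro C h
        rw [hg]
        simp only [h]
        rw [cos_psi t q x h2t C h]
      rw [sum_card_eq k g
        (fun j : Fin (2 * k) → Fin n => ((a 2 - a 1) / 2) ^ (2 * k) * ((a 1 + a 2) / 2) ^ (n - 2 * k)
          * (2 * Real.cos (q * ∑ r : Fin (2 * k), (-1 : ℝ) ^ ((r : ℕ) + 1) * x (j r) ^ 2)))
        hcalc, hSk]
      rw [Finset.mul_sum]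
      refine Finset.sum_congr rfl fun j _ => ?_
      ring
  have hBr : B = 2 * ((a 1 + a 2) / 2) ^ n
      + ∑ k ∈ Finset.Icc 1 (n / 2),
          (((a 2 - a 1) / 2) ^ (2 * k) * ((a 1 + a 2) / 2) ^ (n - 2 * k) * 2) * Sk k := by
    have := c3
    rw [r1] at this
    exact_mod_cast this
  rw [hBr]
  -- final algebra
  have hU : (a 1 + a 2) / 2 = (α + β) / (2 * α * β) := by
    rw [ha1, ha2]; field_simp; ring
  have hV : (a 2 - a 1) / 2 = (α - β) / (2 * α * β) := by
    rw [ha1, ha2, div_eq_div_iff (by norm_num : (2:ℝ) ≠ 0) (by positivity : (2*α*β : ℝ) ≠ 0)]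
    field_simp
  rw [hU, hV, mul_add, mul_one, Finset.mul_sum]
  congr 1
  refine Finset.sum_congr rfl fun k hk => ?_
  have h2k : 2 * k ≤ n := by
    rw [Finset.mem_Icc] at hk
    omega
  have hsplit : ((α + β) / (2 * α * β)) ^ n
      = ((α + β) / (2 * α * β)) ^ (2 * k) * ((α + β) / (2 * α * β)) ^ (n - 2 * k) := by
    rw [← pow_add]
    congr 1
    omega
  have hVR : ((α - β) / (2 * α * β)) = ((α - β) / (α + β)) * ((α + β) / (2 * α * β)) := by
    have hαβ : α + β ≠ 0 := by positivity
    field_simp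
  rw [hsplit, hVR, mul_pow]
  ring
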